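/- Let (X₁,X₂) ~ CN₂(μ, Σ, ν₁, ν₂). Then the conditional distribution of X₂ given X₁ = x₁ is contaminated normal CN(μ_{2.1}, Σ_{22.1}, ω_{ν₂}, ν₂), where μ_{2.1} = μ₂ + Σ₂₁ Σ₁₁^{-1}(x₁ - μ₁), Σ_{22.1} = Σ₂₂ - Σ₂₁ Σ₁₁^{-1} Σ₁₂, and ω_{ν₂} = ν₁ φ(x₁|μ₁, ν₂^{-1}Σ₁₁) / ψ^{CN}(x₁|μ₁, Σ₁₁, ν₁, ν₂); that is, the conditional density of X₂ at x₂ equals ω_{ν₂} φ(x₂|μ_{2.1}, ν₂^{-1}Σ_{22.1}) + (1-ω_{ν₂}) φ(x₂|μ_{2.1}, Σ_{22.1}). -/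

import Mathlib

open MeasureTheory Real Matrix

noncomputable def normalPDF (μ v x : ℝ) : ℝ :=
  (Real.sqrt (2 * Real.pi * v))⁻¹ * Real.exp (-((x - μ) ^ 2) / (2 * v))

noncomputable def normalPDF2 (μ : Fin 2 → ℝ) (S : Matrix (Fin 2) (Fin 2) ℝ)
    (x : Fin 2 → ℝ) : ℝ :=
  (2 * Real.pi)⁻¹ * (Real.sqrt S.det)⁻¹ *
    Real.exp (-(1 / 2) * ((x - μ) ⬝ᵥ S⁻¹ *ᵥ (x - μ)))

noncomputable def cnPDF2 (μ : Fin 2 → ℝ) (S : Matrix (Fin 2) (Fin 2) ℝ)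
    (ν₁ ν₂ : ℝ) (x : Fin 2 → ℝ) : ℝ :=
  ν₁ * normalPDF2 μ (ν₂⁻¹ • S) x + (1 - ν₁) * normalPDF2 μ S x

noncomputable def cnPDF (μ σ2 ν₁ ν₂ x : ℝ) : ℝ :=
  ν₁ * normalPDF μ (σ2 / ν₂) x + (1 - ν₁) * normalPDF μ σ2 x

lemma normalPDF_pos (μ v x : ℝ) (hv : 0 < v) : 0 < normalPDF μ v x := by
  unfold normalPDF
  positivity

lemma factor (μ : Fin 2 → ℝ) (S : Matrix (Fin 2) (Fin 2) ℝ) (ha : 0 < S 0 0)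
    (hd : 0 < S.det) (hsym : S 0 1 = S 1 0) (x₁ x₂ : ℝ) :
    normalPDF2 μ S ![x₁, x₂]
      = normalPDF (μ 0) (S 0 0) x₁ *
        normalPDF (μ 1 + S 1 0 / S 0 0 * (x₁ - μ 0)) (S 1 1 - S 1 0 / S 0 0 * S 0 1) x₂ := by
  have hd' := Matrix.det_fin_two S
  have h221 : S 1 1 - S 1 0 / S 0 0 * S 0 1 = S.det / S 0 0 := by
    rw [hd']; field_simp
  have hQ : ((![x₁, x₂] - μ) ⬝ᵥ S⁻¹ *ᵥ (![x₁, x₂] - μ))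
      = (S 1 1 * (x₁ - μ 0) ^ 2 - 2 * S 1 0 * (x₁ - μ 0) * (x₂ - μ 1)
          + S 0 0 * (x₂ - μ 1) ^ 2) / S.det := by
    rw [Matrix.inv_def, Matrix.adjugate_fin_two]
    simp [dotProduct, Matrix.mulVec, Fin.sum_univ_two, Ring.inverse_eq_inv',
      Pi.sub_apply, hsym]
    field_simp
    ring
  unfold normalPDF2 normalPDF
  rw [hQ, h221]
  have hpre : (Real.sqrt (2 * Real.pi * S 0 0))⁻¹ * (Real.sqrt (2 * Real.pi * (S.det / S 0 0)))⁻¹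
      = (2 * Real.pi)⁻¹ * (Real.sqrt S.det)⁻¹ := by
    rw [← mul_inv, ← Real.sqrt_mul (by positivity)]
    have : 2 * Real.pi * S 0 0 * (2 * Real.pi * (S.det / S 0 0))
        = (2 * Real.pi) ^ 2 * S.det := by field_simp
    rw [this, Real.sqrt_mul (by positivity), Real.sqrt_sq (by positivity), mul_inv]
  have hexp : -(1 / 2) * ((S 1 1 * (x₁ - μ 0) ^ 2 - 2 * S 1 0 * (x₁ - μ 0) * (x₂ - μ 1)
          + S 0 0 * (x₂ - μ 1) ^ 2) / S.det)
      = -((x₁ - μ 0) ^ 2) / (2 * S 0 0)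
        + -((x₂ - (μ 1 + S 1 0 / S 0 0 * (x₁ - μ 0))) ^ 2) / (2 * (S.det / S 0 0)) := by
    have ha' : S 0 0 ≠ 0 := ha.ne'
    have hΔ : S.det ≠ 0 := hd.ne'
    field_simp
    rw [hd', hsym]
    ring
  rw [hexp, Real.exp_add]
  rw [← hpre]
  ring

lemma factor_smul (μ : Fin 2 → ℝ) (S : Matrix (Fin 2) (Fin 2) ℝ) (ha : 0 < S 0 0)
    (hd : 0 < S.det) (hsym : S 0 1 = S 1 0) (ν₂ : ℝ) (hν : 0 < ν₂) (x₁ x₂ : ℝ) :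
    normalPDF2 μ (ν₂⁻¹ • S) ![x₁, x₂]
      = normalPDF (μ 0) (S 0 0 / ν₂) x₁ *
        normalPDF (μ 1 + S 1 0 / S 0 0 * (x₁ - μ 0))
          ((S 1 1 - S 1 0 / S 0 0 * S 0 1) / ν₂) x₂ := by
  have hν' : (ν₂ : ℝ)⁻¹ ≠ 0 := inv_ne_zero hν.ne'
  have hνpos : 0 < (ν₂ : ℝ)⁻¹ := inv_pos.mpr hν
  rw [factor μ (ν₂⁻¹ • S)
      (by simp only [Matrix.smul_apply, smul_eq_mul]; positivity)
      (by rw [Matrix.det_smul]; simp only [Fintype.card_fin]; positivity)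
      (by simp only [Matrix.smul_apply, smul_eq_mul, hsym]) x₁ x₂]
  simp only [Matrix.smul_apply, smul_eq_mul]
  have e1 : ν₂⁻¹ * S 0 0 = S 0 0 / ν₂ := by ring
  have e2 : (ν₂⁻¹ * S 1 0) / (ν₂⁻¹ * S 0 0) = S 1 0 / S 0 0 := mul_div_mul_left _ _ hν'
  have e3 : ν₂⁻¹ * S 1 1 - (ν₂⁻¹ * S 1 0) / (ν₂⁻¹ * S 0 0) * (ν₂⁻¹ * S 0 1)
      = (S 1 1 - S 1 0 / S 0 0 * S 0 1) / ν₂ := by rw [e2]; ring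
  rw [e3, e2, e1]

/-- Conditional of a bivariate contaminated normal: the conditional density of `X₂` given
`X₁ = x₁` equals the univariate contaminated normal density
`ω_{ν₂} φ(x₂ | μ_{2.1}, ν₂⁻¹ Σ_{22.1}) + (1 - ω_{ν₂}) φ(x₂ | μ_{2.1}, Σ_{22.1})`. -/
theorem cn2_conditional (μ : Fin 2 → ℝ) (S : Matrix (Fin 2) (Fin 2) ℝ) (hS : S.PosDef)
    (ν₁ ν₂ : ℝ) (hν₁ : ν₁ ∈ Set.Ioo (0 : ℝ) 1) (hν₂ : ν₂ ∈ Set.Ioo (0 : ℝ) 1)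
    (x₁ x₂ : ℝ) :
    cnPDF2 μ S ν₁ ν₂ ![x₁, x₂] / cnPDF (μ 0) (S 0 0) ν₁ ν₂ x₁
      = (let μ21 : ℝ := μ 1 + S 1 0 / S 0 0 * (x₁ - μ 0);
         let S221 : ℝ := S 1 1 - S 1 0 / S 0 0 * S 0 1;
         let ω : ℝ := ν₁ * normalPDF (μ 0) (S 0 0 / ν₂) x₁ / cnPDF (μ 0) (S 0 0) ν₁ ν₂ x₁;
         ω * normalPDF μ21 (S221 / ν₂) x₂ + (1 - ω) * normalPDF μ21 S221 x₂) := by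
  obtain ⟨hν₁0, hν₁1⟩ := hν₁
  obtain ⟨hν₂0, hν₂1⟩ := hν₂
  have ha : 0 < S 0 0 := by
    exact hS.diag_pos
  have hd : 0 < S.det := hS.det_pos
  have hsym : S 0 1 = S 1 0 := by
    have := congrFun (congrFun hS.1 0) 1
    simpa [Matrix.conjTranspose_apply] using this.symm
  have hA : 0 < normalPDF (μ 0) (S 0 0 / ν₂) x₁ := normalPDF_pos _ _ _ (by positivity)
  have hB : 0 < normalPDF (μ 0) (S 0 0) x₁ := normalPDF_pos _ _ _ ha
  have hD : 0 < cnPDF (μ 0) (S 0 0) ν₁ ν₂ x₁ := by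
    unfold cnPDF
    have h1 : 0 < 1 - ν₁ := by linarith
    positivity
  simp only []
  unfold cnPDF2
  rw [factor μ S ha hd hsym x₁ x₂, factor_smul μ S ha hd hsym ν₂ hν₂0 x₁ x₂]
  set A := normalPDF (μ 0) (S 0 0 / ν₂) x₁
  set B := normalPDF (μ 0) (S 0 0) x₁
  set D := cnPDF (μ 0) (S 0 0) ν₁ ν₂ x₁ with hDdef
  have hDeq : D = ν₁ * A + (1 - ν₁) * B := rfl
  set φν := normalPDF (μ 1 + S 1 0 / S 0 0 * (x₁ - μ 0)) ((S 1 1 - S 1 0 / S 0 0 * S 0 1) / ν₂) x₂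
  set φ := normalPDF (μ 1 + S 1 0 / S 0 0 * (x₁ - μ 0)) (S 1 1 - S 1 0 / S 0 0 * S 0 1) x₂
  rw [hDeq] at hD ⊢
  field_simp
  ring
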